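/- Let C be a contractible topological space with contraction g : [0,1] × C → C (g(0,·) = id, g(1,·) ≡ c₀), and let X be a topological space with an equivalence relation R whose classes are closed and such that g(s, ·) maps each R-class into the closure of an R-class for each s. Then the quotient X/R-analog construction applied to the mapping space C(X, C) yields a contractible quotient: the induced map on equivalence classes satisfies id = g(0,·)* and g(1,·)* is constant, so the quotient space of equivalence classes is contractible. -/

import Mathlib

open unitInterval Set Topology

/-- The map `(s, f) ↦ (x ↦ (s, f x))` from `Y × C(X, C)` to `C(X, Y × C)` is continuous. -/
lemma continuous_pairing {X C Y : Type*} [TopologicalSpace X] [TopologicalSpace C]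
    [TopologicalSpace Y] :
    Continuous (fun p : Y × C(X, C) =>
      ((ContinuousMap.const X p.1).prodMk p.2 : C(X, Y × C))) := by
  rw [ContinuousMap.continuous_compactOpen]
  intro K hK U hU
  rw [isOpen_iff_forall_mem_open]
  rintro ⟨s₀, f₀⟩ (h : MapsTo _ K U)
  have hsub : ({s₀} ×ˢ (f₀ '' K) : Set (Y × C)) ⊆ U := by
    rintro ⟨a, b⟩ ⟨ha, x, hx, rfl⟩
    simp only [mem_singleton_iff] at ha
    subst ha
    exact h hx
  obtain ⟨V, W, hV, hW, hs₀V, hKW, hVWU⟩ :=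
    generalized_tube_lemma isCompact_singleton (hK.image f₀.continuous) hU hsub
  refine ⟨V ×ˢ {f : C(X, C) | MapsTo f K W}, ?_, hV.prod ?_, ?_⟩
  · rintro ⟨s, f⟩ ⟨hs, hf⟩ x hx
    exact hVWU ⟨hs, hf hx⟩
  · exact ContinuousMap.isOpen_setOf_mapsTo hK hW
  · exact ⟨hs₀V rfl, fun x hx => hKW ⟨x, hx, rfl⟩⟩

/-- Let `C` be contractible via `g : [0,1] × C → C` with `g(0,·) = id`, `g(1,·) ≡ c₀`, and
let `S` be an equivalence relation on the mapping space `C(X, C)` with closed classes such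
that post-composition with `g(s,·)` maps each class into the class of the composed map.
Then the quotient of `C(X, C)` by `S` is contractible. -/
theorem quotient_mapping_space_contractible {X C : Type*} [TopologicalSpace X]
    [TopologicalSpace C] (g : C(I × C, C)) (c₀ : C)
    (h0 : ∀ z : C, g (0, z) = z) (h1 : ∀ z : C, g (1, z) = c₀)
    (S : Setoid C(X, C))
    (hclosed : ∀ f : C(X, C), IsClosed {h : C(X, C) | S.r h f})
    (hcompat : ∀ (s : I) (f f' : C(X, C)), S.r f f' →
      S.r (⟨fun x => g (s, f x),
            g.continuous.comp (continuous_const.prodMk f.continuous)⟩ : C(X, C))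
          (⟨fun x => g (s, f' x),
            g.continuous.comp (continuous_const.prodMk f'.continuous)⟩ : C(X, C))) :
    ContractibleSpace (Quotient S) := by
  -- the basic homotopy on the mapping space
  set Φ : I × C(X, C) → C(X, C) :=
    fun p => g.comp ((ContinuousMap.const X p.1).prodMk p.2) with hΦ
  have hΦeq : ∀ (s : I) (f : C(X, C)), Φ (s, f) =
      (⟨fun x => g (s, f x),
        g.continuous.comp (continuous_const.prodMk f.continuous)⟩ : C(X, C)) := by
    intro s f; ext x; rfl
  have hΦcont : Continuous Φ := (ContinuousMap.continuous_postcomp g).comp continuous_pairing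
  -- the induced homotopy on the quotient
  set h : I × Quotient S → Quotient S := fun p =>
    Quotient.liftOn p.2 (fun f => ⟦Φ (p.1, f)⟧)
      (fun a b hab => Quotient.sound (by
        rw [hΦeq, hΦeq]; exact hcompat p.1 a b hab)) with hh
  have hcont : Continuous h := by
    apply (isQuotientMap_quotient_mk' (s := S)).continuous_lift_prod_right
    exact continuous_quotient_mk'.comp (hΦcont.comp (Continuous.prodMk
      continuous_fst continuous_snd))
  have hF : ContinuousMap.Homotopy (ContinuousMap.id (Quotient S))
      (ContinuousMap.const _ (⟦ContinuousMap.const X c₀⟧ : Quotient S)) :=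
    { toFun := h
      continuous_toFun := hcont
      map_zero_left := by
        intro q
        induction q using Quotient.ind with
        | _ f =>
          show ⟦Φ (0, f)⟧ = ⟦f⟧
          congr 1
          ext x
          exact h0 (f x)
      map_one_left := by
        intro q
        induction q using Quotient.ind with
        | _ f =>
          show ⟦Φ (1, f)⟧ = _
          congr 1
          ext x
          exact h1 (f x) }
  rw [contractible_iff_id_nullhomotopic]
  exact ⟨⟦ContinuousMap.const X c₀⟧, ⟨hF⟩⟩
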